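/- Let f : ℝ^d → ℝ be convex and differentiable, Ω ⊆ ℝ^d a nonempty closed convex set, and η > 0. For any w_t ∈ Ω and any w_* ∈ Ω, the projected gradient step w_{t+1} = π_Ω(w_t − η ∇f(w_t)) satisfies f(w_t) − f(w_*) ≤ (‖w_t − w_*‖² − ‖w_{t+1} − w_*‖²)/(2η) + (η/2) ‖∇f(w_t)‖². -/

import Mathlib

open InnerProductSpace

lemma grad_convex_ineq {d : ℕ} (f : EuclideanSpace ℝ (Fin d) → ℝ)
    (hconv : ConvexOn ℝ Set.univ f) (hdiff : Differentiable ℝ f)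
    (x y : EuclideanSpace ℝ (Fin d)) :
    f x + ⟪gradient f x, y - x⟫_ℝ ≤ f y := by
  set c : ℝ → EuclideanSpace ℝ (Fin d) := fun t => t • (y - x) + x with hc
  have hceq : (f ∘ AffineMap.lineMap x y : ℝ → ℝ) = f ∘ c := by
    funext t
    simp only [Function.comp_apply, AffineMap.lineMap_apply_module, c]
    congr 1
    module
  have hφconv : ConvexOn ℝ Set.univ (f ∘ c) := by
    have := hconv.comp_affineMap (AffineMap.lineMap x y : ℝ →ᵃ[ℝ] EuclideanSpace ℝ (Fin d))
    rw [hceq] at this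
    simpa using this
  have hcder : HasDerivAt c (y - x) 0 := by
    simpa [c] using ((hasDerivAt_id (0:ℝ)).smul_const (y - x)).add_const x
  have hF : HasFDerivAt f (toDual ℝ (EuclideanSpace ℝ (Fin d)) (gradient f x)) x :=
    hasGradientAt_iff_hasFDerivAt.mp (hdiff x).hasGradientAt
  have hc0 : c 0 = x := by simp [c]
  have hF' : HasFDerivAt f (toDual ℝ (EuclideanSpace ℝ (Fin d)) (gradient f x)) (c 0) := by
    rw [hc0]; exact hF
  have hφder : HasDerivAt (f ∘ c) ⟪gradient f x, y - x⟫_ℝ 0 := by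
    have := hF'.comp_hasDerivAt 0 hcder
    simpa [InnerProductSpace.toDual_apply_apply] using this
  have hslope := hφconv.le_slope_of_hasDerivAt (Set.mem_univ (0:ℝ)) (Set.mem_univ 1)
      zero_lt_one hφder
  have hc1 : c 1 = y := by simp [c]
  rw [slope_def_field] at hslope
  simp only [Function.comp_apply, hc0, hc1, sub_zero, div_one] at hslope
  linarith

set_option maxHeartbeats 1000000 in
/-- one-step projected gradient descent inequality for a convex
differentiable `f`.  The projection `π_Ω` is characterized as the point of `Ω`
nearest to `w_t − η ∇f(w_t)`. -/
theorem projected_gradient_step {d : ℕ} (f : EuclideanSpace ℝ (Fin d) → ℝ)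
    (hconv : ConvexOn ℝ Set.univ f) (hdiff : Differentiable ℝ f)
    (Ω : Set (EuclideanSpace ℝ (Fin d))) (hΩne : Ω.Nonempty)
    (hΩcl : IsClosed Ω) (hΩcv : Convex ℝ Ω)
    (η : ℝ) (hη : 0 < η)
    (wt wstar wt1 : EuclideanSpace ℝ (Fin d)) (hwt : wt ∈ Ω) (hws : wstar ∈ Ω)
    (hmem : wt1 ∈ Ω)
    (hproj : ∀ u ∈ Ω, ‖wt - η • gradient f wt - wt1‖ ≤ ‖wt - η • gradient f wt - u‖) :
    f wt - f wstar ≤ (‖wt - wstar‖ ^ 2 - ‖wt1 - wstar‖ ^ 2) / (2 * η) +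
      η / 2 * ‖gradient f wt‖ ^ 2 := by
  set g := gradient f wt with hg
  set y0 := wt - η • g with hy0
  -- minimality as iInf
  haveI : Nonempty ↥Ω := ⟨⟨wt1, hmem⟩⟩
  have hinf : ‖y0 - wt1‖ = ⨅ w : Ω, ‖y0 - w‖ := by
    have hbdd : BddBelow (Set.range fun w : Ω => ‖y0 - ↑w‖) :=
      ⟨0, by rintro r ⟨w, rfl⟩; positivity⟩
    exact le_antisymm (le_ciInf fun w => hproj w w.2) (ciInf_le hbdd ⟨wt1, hmem⟩)
  have hvar : ∀ w ∈ Ω, ⟪y0 - wt1, w - wt1⟫_ℝ ≤ 0 :=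
    (norm_eq_iInf_iff_real_inner_le_zero hΩcv hmem).mp hinf
  have hvs : ⟪y0 - wt1, wstar - wt1⟫_ℝ ≤ 0 := hvar wstar hws
  -- ‖wt1 - wstar‖² ≤ ‖y0 - wstar‖²
  have hexp : ‖y0 - wstar‖ ^ 2 =
      ‖y0 - wt1‖ ^ 2 - 2 * ⟪y0 - wt1, wstar - wt1⟫_ℝ + ‖wt1 - wstar‖ ^ 2 := by
    have h := norm_sub_sq_real (y0 - wt1) (wstar - wt1)
    have heq : (y0 - wt1) - (wstar - wt1) = y0 - wstar := by abel
    rw [heq] at h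
    have heq2 : ‖wstar - wt1‖ = ‖wt1 - wstar‖ := norm_sub_rev _ _
    rw [h, heq2]
  have hkey : ‖wt1 - wstar‖ ^ 2 ≤ ‖y0 - wstar‖ ^ 2 := by
    nlinarith [sq_nonneg ‖y0 - wt1‖]
  -- expand ‖y0 - wstar‖²
  have hexp2 : ‖y0 - wstar‖ ^ 2 =
      ‖wt - wstar‖ ^ 2 - 2 * η * ⟪g, wt - wstar⟫_ℝ + η ^ 2 * ‖g‖ ^ 2 := by
    have heq : y0 - wstar = (wt - wstar) - η • g := by rw [hy0]; abel
    rw [heq, norm_sub_sq_real, real_inner_smul_right, norm_smul, real_inner_comm]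
    simp [abs_of_pos hη]
    ring
  -- convexity
  have hcg := grad_convex_ineq f hconv hdiff wt wstar
  have hinner : ⟪g, wstar - wt⟫_ℝ = - ⟪g, wt - wstar⟫_ℝ := by
    rw [← inner_neg_right]; congr 1; abel
  rw [hinner] at hcg
  have h2η : (0:ℝ) < 2 * η := by linarith
  have hmain : 2 * η * (f wt - f wstar) ≤
      ‖wt - wstar‖ ^ 2 - ‖wt1 - wstar‖ ^ 2 + η ^ 2 * ‖g‖ ^ 2 := by
    nlinarith [hkey, hexp2, hcg]
  have hrw : (‖wt - wstar‖ ^ 2 - ‖wt1 - wstar‖ ^ 2) / (2 * η) + η / 2 * ‖g‖ ^ 2 =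
      (‖wt - wstar‖ ^ 2 - ‖wt1 - wstar‖ ^ 2 + η ^ 2 * ‖g‖ ^ 2) / (2 * η) := by
    field_simp
  rw [hrw, le_div_iff₀ h2η]
  linarith
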